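/- Let Λ = diag(λ e^{i2π a₁/ζ}, …, λ e^{i2π a_n/ζ}) with λ ≠ 0, ζ a prime, and a₁,…,a_n ∈ ℤ pairwise incongruent mod ζ. Let C ∈ ℂ^{1×n} have all entries nonzero. If b₁,…,b_n ∈ ℤ₊ are pairwise incongruent mod ζ, then the matrix whose rows are C Λ^{b₁}, …, C Λ^{b_n} is invertible. -/

import Mathlib

open Polynomial

lemma aux_deriv_dvd {F : Type*} [CommRing F] (n : ℕ) (P : F[X])
    (h : (X - 1 : F[X]) ^ (n + 1) ∣ P) : (X - 1 : F[X]) ^ n ∣ derivative P := by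
  obtain ⟨Q, rfl⟩ := h
  rw [derivative_mul, derivative_pow]
  rw [Nat.add_sub_cancel]
  apply dvd_add
  · exact ((dvd_mul_left _ _).mul_right _).mul_right _
  · exact (pow_dvd_pow _ (Nat.le_succ n)).mul_right _

lemma aux_pow_mod {M : Type*} [Monoid M] {z : M} {p : ℕ} (hz : z ^ p = 1) (i : ℕ) :
    z ^ i = z ^ (i % p) := by
  conv_lhs => rw [← Nat.div_add_mod i p]
  rw [pow_add, pow_mul, hz, one_pow, one_mul]

lemma aux_prod_dvd {R : Type*} [CommRing R] [IsDomain R] {ι : Type*} [DecidableEq ι]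
    (s : Finset ι) (r : ι → R) (f : R[X])
    (hdist : ∀ i ∈ s, ∀ j ∈ s, i ≠ j → r i ≠ r j) (hroot : ∀ i ∈ s, f.eval (r i) = 0) :
    (∏ i ∈ s, (X - C (r i))) ∣ f := by
  induction s using Finset.induction_on generalizing f with
  | empty => simp
  | @insert a s ha ih =>
    obtain ⟨g, rfl⟩ := (dvd_iff_isRoot (p := f)).mpr (hroot a (Finset.mem_insert_self a s))
    rw [Finset.prod_insert ha]
    apply mul_dvd_mul_left
    apply ih
    · intro i hi j hj hij
      exact hdist i (Finset.mem_insert_of_mem hi) j (Finset.mem_insert_of_mem hj) hij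
    · intro i hi
      have h := hroot i (Finset.mem_insert_of_mem hi)
      rw [eval_mul, eval_sub, eval_X, eval_C, mul_eq_zero] at h
      rcases h with h | h
      · exact absurd (sub_eq_zero.mp h)
          (hdist i (Finset.mem_insert_of_mem hi) a (Finset.mem_insert_self a s)
            (fun hia => ha (hia ▸ hi)))
      · exact h

lemma key_lemma {F : Type*} [CommRing F] [IsDomain F] {p : ℕ} (hp : p.Prime) [CharP F p] :
    ∀ (n : ℕ) (P : F[X]), P.support.card ≤ n → (∀ k ∈ P.support, k < p) →
      (X - 1 : F[X]) ^ n ∣ P → P = 0 := by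
  intro n
  induction n with
  | zero =>
    intro P hcard _ _
    rw [Nat.le_zero, Finset.card_eq_zero, support_eq_empty] at hcard
    exact hcard
  | succ n ih =>
    intro P hcard hdeg hdvd
    by_contra hP
    have hcard' : P.support.card = n + 1 := by
      rcases Nat.lt_or_ge P.support.card (n + 1) with h | h
      · exact absurd (ih P (Nat.lt_succ_iff.mp h) hdeg
          ((pow_dvd_pow _ (Nat.le_succ n)).trans hdvd)) hP
      · omega
    set t := P.natTrailingDegree with ht
    have htmem : t ∈ P.support := natTrailingDegree_mem_support_of_nonzero hP
    set Q : F[X] := X * derivative P - C ((t : F)) * P with hQdef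
    have hQdvd : (X - 1 : F[X]) ^ n ∣ Q := by
      apply dvd_sub
      · exact (aux_deriv_dvd n P hdvd).mul_left X
      · exact ((pow_dvd_pow _ (Nat.le_succ n)).trans hdvd).mul_left _
    have hQcoeff : ∀ k : ℕ, Q.coeff k = ((k : F) - (t : F)) * P.coeff k := by
      intro k
      rw [hQdef, coeff_sub, coeff_C_mul]
      cases k with
      | zero =>
        rw [mul_coeff_zero, coeff_X_zero, zero_mul]
        push_cast
        ring
      | succ m =>
        rw [coeff_X_mul, coeff_derivative]
        push_cast
        ring
    have hQsupp : Q.support ⊆ P.support.erase t := by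
      intro k hk
      rw [mem_support_iff] at hk
      rw [Finset.mem_erase, mem_support_iff]
      refine ⟨fun hkt => hk ?_, fun hPk => hk (by rw [hQcoeff, hPk, mul_zero])⟩
      rw [hQcoeff, hkt, sub_self, zero_mul]
    have hQ0 : Q = 0 := by
      apply ih Q _ (fun k hk => hdeg k (Finset.mem_of_mem_erase (hQsupp hk))) hQdvd
      calc Q.support.card ≤ (P.support.erase t).card := Finset.card_le_card hQsupp
        _ = P.support.card - 1 := Finset.card_erase_of_mem htmem
        _ ≤ n := by omega
    have hsupp_sub : P.support ⊆ {t} := by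
      intro k hk
      rw [Finset.mem_singleton]
      by_contra hkt
      have h0 : ((k : F) - (t : F)) * P.coeff k = 0 := by
        rw [← hQcoeff, hQ0, coeff_zero]
      rcases mul_eq_zero.mp h0 with h | h
      · have : (k : F) = (t : F) := sub_eq_zero.mp h
        exact hkt (CharP.natCast_injOn_Iio F p (hdeg k hk) (hdeg t htmem) this)
      · exact (mem_support_iff.mp hk) h
    have hsupp : P.support = {t} := Finset.Subset.antisymm hsupp_sub
      (Finset.singleton_subset_iff.mpr htmem)
    have hn0 : n = 0 := by
      have := hcard'
      rw [hsupp, Finset.card_singleton] at this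
      omega
    have heval : P.eval 1 = 0 := by
      have h1 : (X - 1 : F[X]) ∣ P := by
        have := hdvd
        rw [hn0, pow_one] at this
        exact this
      obtain ⟨g, rfl⟩ := h1
      simp
    have : P.coeff t = 0 := by
      rw [eval_eq_sum, Polynomial.sum_def, hsupp, Finset.sum_singleton, one_pow, mul_one] at heval
      exact heval
    exact mem_support_iff.mp htmem this

set_option synthInstance.maxHeartbeats 1000000 in
set_option maxHeartbeats 1000000 in
lemma core_det_ne_zero (p : ℕ+) [hpf : Fact (p : ℕ).Prime] (K : Type*) [Field K]
    [CharZero K] [IsCyclotomicExtension {(p : ℕ)} ℚ K] {z : K} (hz : IsPrimitiveRoot z p)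
    {n : ℕ} (E : Fin n → Fin n → ℕ) (α β : Fin n → ℕ)
    (hα : ∀ ℓ, α ℓ < (p : ℕ)) (hβ : ∀ m, β m < (p : ℕ))
    (hαinj : Function.Injective α) (hβinj : Function.Injective β)
    (hE : ∀ ℓ m, z ^ E ℓ m = (z ^ β m) ^ α ℓ) :
    (Matrix.of fun m ℓ : Fin n => z ^ E ℓ m).det ≠ 0 := by
  haveI : NumberField K := IsCyclotomicExtension.numberField {(p : ℕ)} ℚ K
  set R := NumberField.RingOfIntegers K with hR
  set zR : R := hz.toInteger with hzRdef
  have hinj : Function.Injective (algebraMap R K) := IsFractionRing.injective R K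
  have hzRK : algebraMap R K zR = z := rfl
  -- the determinant over K is the image of the determinant over R
  have hmap : (Matrix.of fun m ℓ : Fin n => z ^ E ℓ m) =
      (Matrix.of fun m ℓ : Fin n => zR ^ E ℓ m).map (algebraMap R K) := by
    ext m ℓ
    simp [Matrix.map_apply, ← hzRK, map_pow]
  rw [hmap, ← RingHom.mapMatrix_apply, ← RingHom.map_det]
  intro hdet0
  have hdetR : (Matrix.of fun m ℓ : Fin n => zR ^ E ℓ m).det = 0 := by
    apply hinj
    rw [hdet0, map_zero]
  -- kernel vector over R
  obtain ⟨v, hv0, hvker⟩ := (Matrix.exists_mulVec_eq_zero_iff).mpr hdetR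
  obtain ⟨i₀, hi₀⟩ : ∃ i, v i ≠ 0 := Function.ne_iff.mp hv0
  have hrel : ∀ m, ∑ ℓ, v ℓ * zR ^ E ℓ m = 0 := by
    intro m
    have := congrFun hvker m
    simpa [Matrix.mulVec, dotProduct, mul_comm] using this
  -- the prime π = z - 1
  set π : R := zR - 1 with hπdef
  have hπ : Prime π := hz.zeta_sub_one_prime'
  -- reduction step
  have red : ∀ w : Fin n → R, (∀ m, ∑ ℓ, w ℓ * zR ^ E ℓ m = 0) →
      (∃ i, ¬ π ∣ w i) → False := by
    rintro w hw ⟨i₁, hi₁⟩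
    set I : Ideal R := Ideal.span {π} with hIdef
    have hInebot : I ≠ ⊥ := by
      simpa [hIdef, Ideal.span_singleton_eq_bot] using hπ.ne_zero
    haveI hIprime : I.IsPrime := (Ideal.span_singleton_prime hπ.ne_zero).mpr hπ
    haveI hImax : I.IsMaximal := hIprime.isMaximal hInebot
    set ρ := Ideal.Quotient.mk I with hρdef
    have hρπ : ρ π = 0 := Ideal.Quotient.eq_zero_iff_mem.mpr (Ideal.mem_span_singleton_self π)
    have hρz : ρ zR = 1 := by
      have := hρπ
      rwa [hπdef, map_sub, map_one, sub_eq_zero] at this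
    -- characteristic p
    have hcyc : (Polynomial.cyclotomic (p : ℕ) R).eval zR = 0 := by
      apply hinj
      rw [map_zero, ← Polynomial.eval₂_at_apply, ← Polynomial.eval_map, Polynomial.map_cyclotomic]
      exact hz.isRoot_cyclotomic p.pos
    have hcharp : (((p : ℕ) : ℕ) : R ⧸ I) = 0 := by
      have := congrArg ρ hcyc
      rwa [map_zero, ← Polynomial.eval₂_at_apply, ← Polynomial.eval_map,
        Polynomial.map_cyclotomic, hρz, Polynomial.eval_one_cyclotomic_prime] at this
    haveI : CharP (R ⧸ I) (p : ℕ) := by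
      rcases (hpf.out.eq_one_or_self_of_dvd _ (ringChar.dvd hcharp)) with h | h
      · exfalso
        haveI := ringChar.of_eq h
        exact CharP.false_of_nontrivial_of_char_one (R := R ⧸ I)
      · exact ringChar.of_eq h
    -- the polynomial
    set Q : Polynomial R := ∑ ℓ, Polynomial.C (w ℓ) * Polynomial.X ^ (α ℓ) with hQdef
    have hEzR : ∀ ℓ m, (zR ^ β m) ^ α ℓ = zR ^ E ℓ m := by
      intro ℓ m
      apply hinj
      rw [map_pow, map_pow, map_pow, hzRK]
      exact (hE ℓ m).symm
    have hQroot : ∀ m, Q.eval (zR ^ β m) = 0 := by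
      intro m
      rw [hQdef, Polynomial.eval_finset_sum]
      simp only [eval_mul, eval_C, eval_pow, eval_X]
      rw [Finset.sum_congr rfl (fun ℓ _ => by rw [hEzR ℓ m])]
      exact hw m
    have hdist : ∀ m ∈ Finset.univ, ∀ m' ∈ Finset.univ, m ≠ m' →
        (zR ^ β m : R) ≠ zR ^ β m' := by
      intro m _ m' _ hne heq
      apply hne
      apply hβinj
      apply hz.pow_inj (hβ m) (hβ m')
      have := congrArg (algebraMap R K) heq
      rwa [map_pow, map_pow, hzRK] at this
    have hdvd : (∏ m, (Polynomial.X - Polynomial.C (zR ^ β m))) ∣ Q :=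
      aux_prod_dvd Finset.univ _ Q hdist (fun m _ => hQroot m)
    -- map to the quotient
    have hQbar : Q.map ρ = ∑ ℓ, Polynomial.C (ρ (w ℓ)) * Polynomial.X ^ (α ℓ) := by
      rw [hQdef, Polynomial.map_sum]
      simp [Polynomial.map_mul, Polynomial.map_pow]
    have hdvdF : ((Polynomial.X : Polynomial (R ⧸ I)) - 1) ^ n ∣ Q.map ρ := by
      have h2 := Polynomial.map_dvd ρ hdvd
      rwa [Polynomial.map_prod, Finset.prod_congr rfl
        (fun m _ => by rw [Polynomial.map_sub, Polynomial.map_X, Polynomial.map_C, map_pow, hρz,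
          one_pow, Polynomial.C_1]), Finset.prod_const, Finset.card_univ, Fintype.card_fin] at h2
    have hsupp : (Q.map ρ).support ⊆ Finset.image α Finset.univ := by
      intro k hk
      rw [mem_support_iff] at hk
      by_contra hkim
      apply hk
      rw [hQbar, finset_sum_coeff]
      apply Finset.sum_eq_zero
      intro ℓ _
      rw [coeff_C_mul, coeff_X_pow, if_neg, mul_zero]
      intro hkα
      exact hkim (Finset.mem_image.mpr ⟨ℓ, Finset.mem_univ ℓ, hkα.symm⟩)
    have hQb0 : Q.map ρ = 0 := by
      apply key_lemma hpf.out n (Q.map ρ) _ _ hdvdF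
      · calc (Q.map ρ).support.card ≤ (Finset.image α Finset.univ).card :=
            Finset.card_le_card hsupp
          _ ≤ Finset.univ.card := Finset.card_image_le
          _ = n := by simp
      · intro k hk
        obtain ⟨ℓ, _, hℓ⟩ := Finset.mem_image.mp (hsupp hk)
        exact hℓ ▸ hα ℓ
    have hw0 : ρ (w i₁) = 0 := by
      have hc := congrArg (fun q : Polynomial (R ⧸ I) => q.coeff (α i₁)) hQb0
      simp only [coeff_zero] at hc
      rw [hQbar, finset_sum_coeff] at hc
      rw [Finset.sum_eq_single i₁] at hc
      · rwa [coeff_C_mul, coeff_X_pow, if_pos rfl, mul_one] at hc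
      · intro ℓ _ hℓ
        rw [coeff_C_mul, coeff_X_pow, if_neg (fun h => hℓ (hαinj h.symm)), mul_zero]
      · intro h
        exact absurd (Finset.mem_univ i₁) h
    exact hi₁ (Ideal.mem_span_singleton.mp (Ideal.Quotient.eq_zero_iff_mem.mp hw0))
  -- induction to divide out powers of π
  have main : ∀ N : ℕ, ∀ w : Fin n → R, (∀ m, ∑ ℓ, w ℓ * zR ^ E ℓ m = 0) →
      ¬ π ^ (N + 1) ∣ w i₀ → False := by
    intro N
    induction N with
    | zero =>
      intro w hw hNdvd
      by_cases hall : ∀ i, π ∣ w i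
      · exact hNdvd (by simpa using hall i₀)
      · push_neg at hall
        exact red w hw hall
    | succ N ih =>
      intro w hw hNdvd
      by_cases hall : ∀ i, π ∣ w i
      · choose u hu using hall
        apply ih u
        · intro m
          have h1 := hw m
          rw [Finset.sum_congr rfl (fun ℓ _ => by rw [hu ℓ, mul_assoc]),
            ← Finset.mul_sum] at h1
          exact (mul_eq_zero.mp h1).resolve_left hπ.ne_zero
        · intro hdvd
          apply hNdvd
          rw [hu i₀, pow_succ']
          exact mul_dvd_mul_left π hdvd
      · push_neg at hall
        exact red w hw hall
  haveI : WfDvdMonoid R := IsNoetherianRing.wfDvdMonoid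
  have hri₀fin : FiniteMultiplicity π (v i₀) :=
    FiniteMultiplicity.of_not_isUnit hπ.not_isUnit hi₀
  obtain ⟨N, hN⟩ := hri₀fin
  exact main N v hrel hN

lemma aux_exp_key (p : ℕ) (hp : p ≠ 0) (x : ℤ) :
    Complex.exp ((x : ℂ) * (2 * Real.pi * Complex.I / p)) =
      Complex.exp (2 * Real.pi * Complex.I / p) ^ ((x % (p : ℤ)).toNat) := by
  have hp0 : (p : ℂ) ≠ 0 := Nat.cast_ne_zero.mpr hp
  have hpz : (p : ℤ) ≠ 0 := Int.natCast_ne_zero.mpr hp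
  have hr : ((x % (p : ℤ)).toNat : ℤ) = x % (p : ℤ) :=
    Int.toNat_of_nonneg (Int.emod_nonneg x hpz)
  rw [← Complex.exp_nat_mul]
  have hx' : ((p : ℤ) * (x / p) + ((x % (p : ℤ)).toNat : ℤ)) = x := by
    rw [hr]; exact Int.mul_ediv_add_emod x p
  have hx : (x : ℂ) = (p : ℂ) * ((x / (p : ℤ) : ℤ) : ℂ) + (((x % (p : ℤ)).toNat : ℕ) : ℂ) := by
    exact_mod_cast (congrArg (Int.cast : ℤ → ℂ) hx').symm
  have hsplit : (x : ℂ) * (2 * Real.pi * Complex.I / p) =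
      ((x / (p : ℤ) : ℤ) : ℂ) * (2 * Real.pi * Complex.I) +
        (((x % (p : ℤ)).toNat : ℕ) : ℂ) * (2 * Real.pi * Complex.I / p) := by
    rw [hx]; field_simp
  rw [hsplit, Complex.exp_add, Complex.exp_int_mul_two_pi_mul_I, one_mul]

lemma aux_exp_pow (p : ℕ) (hp : p ≠ 0) (a : ℤ) (b : ℕ) :
    Complex.exp (2 * Real.pi * Complex.I * (a : ℂ) / p) ^ b =
      Complex.exp (2 * Real.pi * Complex.I / p) ^ (((a * b) % (p : ℤ)).toNat) := by
  rw [← Complex.exp_nat_mul]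
  have h1 : (b : ℂ) * (2 * Real.pi * Complex.I * (a : ℂ) / p) =
      ((a * b : ℤ) : ℂ) * (2 * Real.pi * Complex.I / p) := by
    push_cast; ring
  rw [h1, aux_exp_key p hp]

/-- for `Λ = diag(λ e^{i2π a_ℓ/ζ})` with `λ ≠ 0`, `ζ` prime, the
`a_ℓ` pairwise incongruent mod `ζ`, and a row vector `C` with nonzero entries
`c_ℓ`, the matrix with rows `C Λ^{b_m}` for `b_m` pairwise incongruent mod `ζ`
is invertible. -/
theorem stmt_13 (ζ : ℕ) (hζ : ζ.Prime) (n : ℕ) (lam : ℂ) (hlam : lam ≠ 0)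
    (a : Fin n → ℤ)
    (ha : ∀ i j : Fin n, i ≠ j → ¬ a i ≡ a j [ZMOD (ζ : ℕ)])
    (c : Fin n → ℂ) (hc : ∀ ℓ, c ℓ ≠ 0)
    (b : Fin n → ℕ)
    (hb : ∀ i j : Fin n, i ≠ j → ¬ (b i : ℤ) ≡ (b j : ℤ) [ZMOD (ζ : ℕ)]) :
    IsUnit (Matrix.of fun m ℓ : Fin n =>
      c ℓ * (lam * Complex.exp (2 * Real.pi * Complex.I * ((a ℓ : ℂ)) / (ζ : ℂ))) ^ (b m)) := by
  haveI : Fact ζ.Prime := ⟨hζ⟩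
  have hζ0 : ζ ≠ 0 := hζ.ne_zero
  have hζz : (ζ : ℤ) ≠ 0 := Int.natCast_ne_zero.mpr hζ0
  have hζzpos : (0 : ℤ) < (ζ : ℤ) := Int.natCast_pos.mpr hζ.pos
  set q : ℕ+ := ⟨ζ, hζ.pos⟩ with hqdef
  haveI : Fact (Nat.Prime (q : ℕ)) := ⟨hζ⟩
  set E : Fin n → Fin n → ℕ := fun ℓ m => ((a ℓ * b m) % (ζ : ℤ)).toNat with hEdef
  set α : Fin n → ℕ := fun ℓ => ((a ℓ) % (ζ : ℤ)).toNat with hαdef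
  set β : Fin n → ℕ := fun m => (((b m : ℤ)) % (ζ : ℤ)).toNat with hβdef
  have hα : ∀ ℓ, α ℓ < ζ := by
    intro ℓ
    have h1 := Int.emod_nonneg (a ℓ) hζz
    have h2 := Int.emod_lt_of_pos (a ℓ) hζzpos
    simp only [hαdef]
    omega
  have hβ : ∀ m, β m < ζ := by
    intro m
    have h1 := Int.emod_nonneg ((b m : ℤ)) hζz
    have h2 := Int.emod_lt_of_pos ((b m : ℤ)) hζzpos
    simp only [hβdef]
    omega
  have hαinj : Function.Injective α := by
    intro i j hij
    by_contra hne
    apply ha i j hne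
    have h1 := Int.emod_nonneg (a i) hζz
    have h2 := Int.emod_nonneg (a j) hζz
    have : a i % (ζ : ℤ) = a j % (ζ : ℤ) := by
      simp only [hαdef] at hij
      omega
    exact this
  have hβinj : Function.Injective β := by
    intro i j hij
    by_contra hne
    apply hb i j hne
    have h1 := Int.emod_nonneg ((b i : ℤ)) hζz
    have h2 := Int.emod_nonneg ((b j : ℤ)) hζz
    have : (b i : ℤ) % (ζ : ℤ) = (b j : ℤ) % (ζ : ℤ) := by
      simp only [hβdef] at hij
      omega
    exact this
  -- the cyclotomic field
  set K := CyclotomicField q ℚ with hKdef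
  haveI : CharZero K := charZero_of_injective_algebraMap (algebraMap ℚ K).injective
  haveI : IsCyclotomicExtension {(q : ℕ)} ℚ K :=
    CyclotomicField.isCyclotomicExtension (q : ℕ) ℚ
  set z : K := IsCyclotomicExtension.zeta q ℚ K with hzdef
  have hz : IsPrimitiveRoot z q := IsCyclotomicExtension.zeta_spec q ℚ K
  have hzpow : z ^ ζ = 1 := by
    have := hz.pow_eq_one
    exact this
  have hE : ∀ ℓ m, z ^ E ℓ m = (z ^ β m) ^ α ℓ := by
    intro ℓ m
    rw [← pow_mul]
    have hmod : (β m * α ℓ) % ζ = E ℓ m % ζ := by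
      have h1 : ((a ℓ) % (ζ : ℤ)).toNat = α ℓ := rfl
      have h2 : (((b m : ℤ)) % (ζ : ℤ)).toNat = β m := rfl
      have hn1 := Int.toNat_of_nonneg (Int.emod_nonneg (a ℓ) hζz)
      have hn2 := Int.toNat_of_nonneg (Int.emod_nonneg ((b m : ℤ)) hζz)
      have hn3 := Int.toNat_of_nonneg (Int.emod_nonneg (a ℓ * b m) hζz)
      have : ((β m * α ℓ) % ζ : ℤ) = (E ℓ m % ζ : ℤ) := by
        push_cast
        rw [hn1, hn2, hn3]
        rw [← Int.mul_emod, Int.emod_emod_of_dvd _ dvd_rfl, mul_comm ((b m : ℤ)) (a ℓ)]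
      exact_mod_cast this
    rw [aux_pow_mod hzpow (β m * α ℓ), aux_pow_mod hzpow (E ℓ m), hmod]
  have hdetK : (Matrix.of fun m ℓ : Fin n => z ^ E ℓ m).det ≠ 0 :=
    core_det_ne_zero q K hz E α β hα hβ hαinj hβinj hE
  -- transfer to ℂ
  set ω : ℂ := Complex.exp (2 * Real.pi * Complex.I / ζ) with hωdef
  have hω : IsPrimitiveRoot ω ζ := Complex.isPrimitiveRoot_exp ζ hζ0
  have hmin : Polynomial.aeval ω (minpoly ℚ (hz.powerBasis ℚ).gen) = 0 := by
    rw [IsPrimitiveRoot.powerBasis_gen]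
    rw [← Polynomial.cyclotomic_eq_minpoly_rat hz q.pos]
    rw [Polynomial.aeval_def, ← Polynomial.eval_map, Polynomial.map_cyclotomic]
    exact hω.isRoot_cyclotomic hζ.pos
  set φ : K →ₐ[ℚ] ℂ := (hz.powerBasis ℚ).lift ω hmin with hφdef
  have hφz : φ z = ω := by
    have := (hz.powerBasis ℚ).lift_gen ω hmin
    rwa [IsPrimitiveRoot.powerBasis_gen] at this
  have hφinj : Function.Injective φ := φ.toRingHom.injective
  have hNdet : (Matrix.of fun m ℓ : Fin n => ω ^ E ℓ m).det ≠ 0 := by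
    have h1 : (Matrix.of fun m ℓ : Fin n => ω ^ E ℓ m) =
        (φ : K →+* ℂ).mapMatrix (Matrix.of fun m ℓ : Fin n => z ^ E ℓ m) := by
      ext m ℓ
      simp [RingHom.mapMatrix_apply, Matrix.map_apply, map_pow, hφz]
    rw [h1, ← RingHom.map_det]
    intro h
    exact hdetK (hφinj (h.trans (map_zero _).symm))
  -- assemble
  have hM : (Matrix.of fun m ℓ : Fin n =>
      c ℓ * (lam * Complex.exp (2 * Real.pi * Complex.I * ((a ℓ : ℂ)) / (ζ : ℂ))) ^ (b m)) =
      Matrix.diagonal (fun m => lam ^ b m) * (Matrix.of fun m ℓ : Fin n => ω ^ E ℓ m) *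
        Matrix.diagonal c := by
    ext m ℓ
    rw [Matrix.mul_diagonal, Matrix.diagonal_mul, Matrix.of_apply, Matrix.of_apply]
    rw [mul_pow, aux_exp_pow ζ hζ0 (a ℓ) (b m)]
    ring
  rw [hM]
  rw [Matrix.isUnit_iff_isUnit_det, Matrix.det_mul, Matrix.det_mul, Matrix.det_diagonal,
    Matrix.det_diagonal, isUnit_iff_ne_zero]
  apply mul_ne_zero
  apply mul_ne_zero
  · exact Finset.prod_ne_zero_iff.mpr (fun m _ => pow_ne_zero _ hlam)
  · exact hNdet
  · exact Finset.prod_ne_zero_iff.mpr (fun ℓ _ => hc ℓ)
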